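/- Let A, B be positive operators and X a bounded operator on H. The block operator M = [[A, X],[X*, B]] on H ⊕ H is positive if and only if there exists a bounded operator C with X = C*B^{1/2} and C*C ≤ A. -/

import Mathlib

open ContinuousLinearMap

variable {H : Type*} [NormedAddCommGroup H] [InnerProductSpace ℂ H] [CompleteSpace H]

/-- The 2×2 block operator `[[A, X],[Y, B]]` acting on the Hilbert space `H ⊕ H`
(realized as `WithLp 2 (H × H)`). -/
noncomputable def blockOperator (A X Y B : H →L[ℂ] H) :
    WithLp 2 (H × H) →L[ℂ] WithLp 2 (H × H) :=
  (WithLp.prodContinuousLinearEquiv 2 ℂ H H).symm.toContinuousLinearMap ∘L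
    ((A ∘L ContinuousLinearMap.fst ℂ H H + X ∘L ContinuousLinearMap.snd ℂ H H).prod
      (Y ∘L ContinuousLinearMap.fst ℂ H H + B ∘L ContinuousLinearMap.snd ℂ H H)) ∘L
    (WithLp.prodContinuousLinearEquiv 2 ℂ H H).toContinuousLinearMap

set_option linter.unusedSectionVars false in
private lemma blockOperator_inner (A X Y B : H →L[ℂ] H) (v w : WithLp 2 (H × H)) :
    inner (𝕜 := ℂ) (blockOperator A X Y B v) w =
      inner ℂ (A v.fst) w.fst + inner ℂ (X v.snd) w.fst
        + inner ℂ (Y v.fst) w.snd + inner ℂ (B v.snd) w.snd := by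
  have hf : ∀ p : H × H, ((WithLp.prodContinuousLinearEquiv 2 ℂ H H).symm p).fst = p.1 :=
    fun _ => rfl
  have hs : ∀ p : H × H, ((WithLp.prodContinuousLinearEquiv 2 ℂ H H).symm p).snd = p.2 :=
    fun _ => rfl
  have h1 : ∀ z : WithLp 2 (H × H),
      ((WithLp.prodContinuousLinearEquiv 2 ℂ H H) z).1 = z.fst := fun _ => rfl
  have h2 : ∀ z : WithLp 2 (H × H),
      ((WithLp.prodContinuousLinearEquiv 2 ℂ H H) z).2 = z.snd := fun _ => rfl
  simp only [blockOperator, WithLp.prod_inner_apply, ContinuousLinearMap.comp_apply,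
    ContinuousLinearEquiv.coe_coe, ContinuousLinearMap.prod_apply, add_apply,
    ContinuousLinearMap.coe_fst', ContinuousLinearMap.coe_snd', WithLp.ofLp_fst, WithLp.ofLp_snd, hf, hs, h1, h2, inner_add_left]
  ring

private lemma aux_factor (X SB : H →L[ℂ] H) (g : H → ℝ) (c : ℝ) (hc : 0 ≤ c)
    (hg0 : ∀ x, 0 ≤ g x) (hgc : ∀ x, g x ≤ c * ‖x‖ ^ 2)
    (key : ∀ x y, ‖(inner ℂ (X y) x : ℂ)‖ ≤ Real.sqrt (g x) * ‖SB y‖) :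
    ∃ D : H →L[ℂ] H, D ∘L SB = X ∧ ∀ x, ‖adjoint D x‖ ^ 2 ≤ g x := by
  -- bound on X
  have hXb : ∀ y, ‖X y‖ ≤ Real.sqrt c * ‖SB y‖ := by
    intro y
    rcases eq_or_ne (‖X y‖) 0 with h0 | h0
    · rw [h0]; positivity
    · have h1 := key (X y) y
      rw [inner_self_eq_norm_sq_to_K] at h1
      simp only [norm_pow, Complex.norm_real, RCLike.norm_ofReal, abs_norm, norm_norm] at h1
      have h3 : Real.sqrt (g (X y)) ≤ Real.sqrt c * ‖X y‖ := by
        have := hgc (X y)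
        calc Real.sqrt (g (X y)) ≤ Real.sqrt (c * ‖X y‖ ^ 2) := Real.sqrt_le_sqrt this
        _ = Real.sqrt c * ‖X y‖ := by
            rw [Real.sqrt_mul hc, Real.sqrt_sq (norm_nonneg _)]
      have h4 : ‖X y‖ ^ 2 ≤ (Real.sqrt c * ‖X y‖) * ‖SB y‖ :=
        h1.trans (by nlinarith [norm_nonneg (SB y)])
      have hpos : 0 < ‖X y‖ := lt_of_le_of_ne (norm_nonneg _) (Ne.symm h0)
      nlinarith
  have hker : ∀ y, SB y = 0 → X y = 0 := by
    intro y hy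
    have := hXb y
    rw [hy, norm_zero, mul_zero] at this
    exact norm_le_zero_iff.mp this
  -- the range of SB and its closure
  set K : Submodule ℂ H := LinearMap.range (SB : H →ₗ[ℂ] H) with hKdef
  set Kc : Submodule ℂ H := K.topologicalClosure with hKcdef
  haveI : CompleteSpace Kc := K.isClosed_topologicalClosure.completeSpace_coe
  -- a choice of preimage
  let pre : K → H := fun u => (LinearMap.mem_range.mp u.2).choose
  have hpre : ∀ u : K, SB (pre u) = (u : H) := fun u => (LinearMap.mem_range.mp u.2).choose_spec
  have hcong : ∀ (u : K) (y : H), SB y = (u : H) → X (pre u) = X y := by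
    intro u y hy
    have h1 : SB (pre u - y) = 0 := by rw [map_sub, hpre, hy, sub_self]
    have h2 := hker _ h1
    rw [map_sub, sub_eq_zero] at h2
    exact h2
  -- the densely defined factor
  let φ₀ : K →ₗ[ℂ] H :=
    { toFun := fun u => X (pre u)
      map_add' := by
        intro u v
        show X (pre (u + v)) = X (pre u) + X (pre v)
        have h1 : SB (pre u + pre v) = ((u + v : K) : H) := by
          rw [map_add, hpre, hpre]; rfl
        rw [hcong (u + v) _ h1, map_add]
      map_smul' := by
        intro a u
        show X (pre (a • u)) = (RingHom.id ℂ) a • X (pre u)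
        have h1 : SB (a • pre u) = ((a • u : K) : H) := by
          rw [map_smul, hpre]; rfl
        rw [hcong (a • u) _ h1, map_smul]; rfl }
  have hφ₀ : ∀ u : K, ‖φ₀ u‖ ≤ Real.sqrt c * ‖u‖ := by
    intro u
    calc ‖φ₀ u‖ = ‖X (pre u)‖ := rfl
    _ ≤ Real.sqrt c * ‖SB (pre u)‖ := hXb _
    _ = Real.sqrt c * ‖u‖ := by rw [hpre]; rfl
  let φ : K →L[ℂ] H := φ₀.mkContinuous (Real.sqrt c) hφ₀
  -- the inclusion of K into its closure, as an isometry
  let eI : K →ₗᵢ[ℂ] Kc := ⟨Submodule.inclusion K.le_topologicalClosure, fun x => rfl⟩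
  let e : K →L[ℂ] Kc := eI.toContinuousLinearMap
  have himg : ((↑) '' Set.range e : Set H) = (K : Set H) := by
    ext w
    constructor
    · rintro ⟨z, ⟨u, rfl⟩, rfl⟩
      exact u.2
    · intro hw
      exact ⟨e ⟨w, hw⟩, ⟨⟨w, hw⟩, rfl⟩, rfl⟩
  have hdense : DenseRange e := by
    intro z
    rw [closure_subtype, himg]
    have hcoe : (Kc : Set H) = closure (K : Set H) := K.topologicalClosure_coe
    rw [← hcoe]
    exact z.2
  have h_e : IsUniformInducing e := eI.isometry.isUniformInducing
  let ext : Kc →L[ℂ] H := φ.extend e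
  let D : H →L[ℂ] H := ext ∘L Submodule.orthogonalProjection Kc
  have hD1 : ∀ y, D (SB y) = X y := by
    intro y
    have hKmem : SB y ∈ K := LinearMap.mem_range.mpr ⟨y, rfl⟩
    have hKcmem : SB y ∈ Kc := K.le_topologicalClosure hKmem
    have hproj : Submodule.orthogonalProjection Kc (SB y) = ⟨SB y, hKcmem⟩ :=
      Submodule.orthogonalProjection_mem_subspace_eq_self (⟨SB y, hKcmem⟩ : Kc)
    have he : e ⟨SB y, hKmem⟩ = (⟨SB y, hKcmem⟩ : Kc) := rfl
    have hext : ext (⟨SB y, hKcmem⟩ : Kc) = φ ⟨SB y, hKmem⟩ := by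
      rw [← he]
      exact ContinuousLinearMap.extend_eq φ hdense h_e _
    have hφval : φ ⟨SB y, hKmem⟩ = X y := hcong ⟨SB y, hKmem⟩ y rfl
    show ext (Submodule.orthogonalProjection Kc (SB y)) = X y
    rw [hproj, hext, hφval]
  refine ⟨D, by ext y; exact hD1 y, ?_⟩
  intro x
  set u := adjoint D x with hu
  have humem : u ∈ Kc := by
    rw [← Submodule.orthogonal_orthogonal Kc, Submodule.mem_orthogonal]
    intro w hw
    have hDw : D w = 0 := by
      show ext (Submodule.orthogonalProjection Kc w) = 0
      rw [Submodule.orthogonalProjection_mem_subspace_orthogonalComplement_eq_zero hw, map_zero]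
    rw [hu, ContinuousLinearMap.adjoint_inner_right, hDw, inner_zero_left]
  have hineq : ∀ w ∈ Kc, ‖(inner ℂ u w : ℂ)‖ ≤ Real.sqrt (g x) * ‖w‖ := by
    have hSclosed : IsClosed {w : H | ‖(inner ℂ u w : ℂ)‖ ≤ Real.sqrt (g x) * ‖w‖} :=
      isClosed_le ((Continuous.inner continuous_const continuous_id).norm)
        (continuous_const.mul continuous_norm)
    have hKS : (K : Set H) ⊆ {w : H | ‖(inner ℂ u w : ℂ)‖ ≤ Real.sqrt (g x) * ‖w‖} := by
      rintro w hw
      obtain ⟨y, rfl⟩ := LinearMap.mem_range.mp hw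
      have h1 : (inner ℂ u (SB y) : ℂ) = inner ℂ x (X y) := by
        rw [hu, ContinuousLinearMap.adjoint_inner_left, hD1]
      show ‖(inner ℂ u (SB y) : ℂ)‖ ≤ Real.sqrt (g x) * ‖SB y‖
      rw [h1, ← norm_inner_symm]
      exact key x y
    intro w hw
    have hcoe : (Kc : Set H) = closure (K : Set H) := K.topologicalClosure_coe
    have : (Kc : Set H) ⊆ {w : H | ‖(inner ℂ u w : ℂ)‖ ≤ Real.sqrt (g x) * ‖w‖} := by
      rw [hcoe]; exact closure_minimal hKS hSclosed
    exact this hw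
  have huu := hineq u humem
  rw [inner_self_eq_norm_sq_to_K] at huu
  simp only [norm_pow, Complex.norm_real, RCLike.norm_ofReal, abs_norm, norm_norm] at huu
  rcases eq_or_ne (‖u‖) 0 with h0 | h0
  · rw [h0]; simpa using hg0 x
  · have hpos : 0 < ‖u‖ := lt_of_le_of_ne (norm_nonneg _) (Ne.symm h0)
    have h1 : ‖u‖ ≤ Real.sqrt (g x) := by nlinarith
    have h2 : ‖u‖ ^ 2 ≤ Real.sqrt (g x) ^ 2 := by nlinarith [Real.sqrt_nonneg (g x)]
    rwa [Real.sq_sqrt (hg0 x)] at h2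


private lemma cs_step (A B X : H →L[ℂ] H) (hA : A.IsPositive) (hB : B.IsPositive)
    (hM : (blockOperator A X (adjoint X) B).IsPositive) (x y : H) :
    ‖(inner ℂ (X y) x : ℂ)‖ ^ 2
      ≤ RCLike.re (inner ℂ (A x) x : ℂ) * RCLike.re (inner ℂ (B y) y : ℂ) := by
  set α : ℂ := inner ℂ (X y) x with hα
  rcases eq_or_ne α 0 with h0 | h0
  · rw [h0]
    simp only [norm_zero]
    have := mul_nonneg (hA.re_inner_nonneg_left x) (hB.re_inner_nonneg_left y)
    nlinarith
  · have hαn : (‖α‖ : ℂ) ≠ 0 := by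
      simpa using h0
    set cc : ℂ := α / ‖α‖ with hcc
    have hcc1 : (starRingEnd ℂ) cc * α = (‖α‖ : ℂ) := by
      rw [hcc, map_div₀, Complex.conj_ofReal, div_mul_eq_mul_div, RCLike.conj_mul,
        div_eq_iff hαn]
      norm_cast
      congr 1
      exact sq ‖α‖
    have hcc2 : (starRingEnd ℂ) cc * cc = 1 := by
      rw [RCLike.conj_mul, hcc, norm_div]
      simp only [Complex.norm_real, norm_norm]
      rw [div_self (by simpa using h0)]
      norm_num
    have hq : ∀ t : ℝ, 0 ≤ RCLike.re (inner ℂ (B y) y : ℂ) * (t * t)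
        + (2 * ‖α‖) * t + RCLike.re (inner ℂ (A x) x : ℂ) := by
      intro t
      set s : ℂ := (t : ℂ) * cc with hs
      set v : WithLp 2 (H × H) := (WithLp.equiv 2 (H × H)).symm (x, s • y) with hv
      have h1 := hM.2 v
      rw [reApplyInnerSelf_apply, blockOperator_inner] at h1
      have hv1 : v.fst = x := rfl
      have hv2 : v.snd = s • y := rfl
      rw [hv1, hv2] at h1
      have e1 : (inner ℂ (X (s • y)) x : ℂ) = ((t * ‖α‖ : ℝ) : ℂ) := by
        rw [map_smul, inner_smul_left, ← hα, hs, map_mul, Complex.conj_ofReal]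
        push_cast
        rw [mul_assoc, hcc1]
      have e2 : (inner ℂ ((adjoint X) x) (s • y) : ℂ) = ((t * ‖α‖ : ℝ) : ℂ) := by
        rw [adjoint_inner_left, ← inner_conj_symm, e1, Complex.conj_ofReal]
      have e3 : (inner ℂ (B (s • y)) (s • y) : ℂ) = ((t * t : ℝ) : ℂ) * inner ℂ (B y) y := by
        rw [map_smul, inner_smul_left, inner_smul_right, hs, map_mul, Complex.conj_ofReal]
        have : (starRingEnd ℂ) cc * ((t : ℂ) * cc) = (t : ℂ) := by
          rw [show (starRingEnd ℂ) cc * ((t : ℂ) * cc) = (t : ℂ) * ((starRingEnd ℂ) cc * cc) by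
            ring, hcc2, mul_one]
        have h9 : (t : ℂ) * (starRingEnd ℂ) cc * ((t : ℂ) * cc * inner ℂ (B y) y)
            = ((starRingEnd ℂ) cc * ((t : ℂ) * cc)) * ((t : ℂ) * inner ℂ (B y) y) := by ring
        rw [h9, this]
        push_cast
        ring
      rw [e1, e2, e3] at h1
      simp only [RCLike.re_to_complex] at h1 ⊢
      simp only [Complex.add_re, Complex.ofReal_re, Complex.re_ofReal_mul] at h1
      linarith
    have hd := discrim_le_zero hq
    rw [discrim] at hd
    nlinarith [norm_nonneg α, hA.re_inner_nonneg_left x, hB.re_inner_nonneg_left y]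

/-- For positive `A, B`: `[[A, X],[X*, B]] ≥ 0` iff `X = C* B^{1/2}` for some
bounded `C` with `C* C ≤ A` (the square root `B^{1/2}` being characterized as
the positive operator `SB` with `SB² = B`). -/
theorem blockOperator_isPositive_iff_factor
    (A B X SB : H →L[ℂ] H) (hA : A.IsPositive) (hB : B.IsPositive)
    (hSB : SB.IsPositive) (hSB2 : SB ∘L SB = B) :
    (blockOperator A X (adjoint X) B).IsPositive ↔
      ∃ C : H →L[ℂ] H, X = adjoint C ∘L SB ∧ (A - adjoint C ∘L C).IsPositive := by
  have hSBsymm := hSB.1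
  have hBSB : ∀ y, RCLike.re (inner ℂ (B y) y : ℂ) = ‖SB y‖ ^ 2 := by
    intro y
    rw [← hSB2]
    have : (inner ℂ (SB (SB y)) y : ℂ) = inner ℂ (SB y) (SB y) := hSBsymm (SB y) y
    rw [ContinuousLinearMap.comp_apply, this, inner_self_eq_norm_sq]
  constructor
  · intro hM
    have key2 : ∀ x y, ‖(inner ℂ (X y) x : ℂ)‖
        ≤ Real.sqrt (RCLike.re (inner ℂ (A x) x : ℂ)) * ‖SB y‖ := by
      intro x y
      have h1 := cs_step A B X hA hB hM x y
      rw [hBSB] at h1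
      have h2 : ‖(inner ℂ (X y) x : ℂ)‖
          = Real.sqrt (‖(inner ℂ (X y) x : ℂ)‖ ^ 2) := by
        rw [Real.sqrt_sq (norm_nonneg _)]
      rw [h2]
      calc Real.sqrt (‖(inner ℂ (X y) x : ℂ)‖ ^ 2)
          ≤ Real.sqrt (RCLike.re (inner ℂ (A x) x : ℂ) * ‖SB y‖ ^ 2) := Real.sqrt_le_sqrt h1
        _ = Real.sqrt (RCLike.re (inner ℂ (A x) x : ℂ)) * ‖SB y‖ := by
            rw [Real.sqrt_mul (hA.re_inner_nonneg_left x), Real.sqrt_sq (norm_nonneg _)]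
    have hgc : ∀ x, RCLike.re (inner ℂ (A x) x : ℂ) ≤ ‖A‖ * ‖x‖ ^ 2 := by
      intro x
      have h1 : RCLike.re (inner ℂ (A x) x : ℂ) ≤ ‖(inner ℂ (A x) x : ℂ)‖ := RCLike.re_le_norm _
      have h2 : ‖(inner ℂ (A x) x : ℂ)‖ ≤ ‖A x‖ * ‖x‖ := norm_inner_le_norm _ _
      have h3 : ‖A x‖ ≤ ‖A‖ * ‖x‖ := A.le_opNorm x
      nlinarith [norm_nonneg x, norm_nonneg (A x)]
    obtain ⟨D, hD, hb⟩ := aux_factor X SB (fun x => RCLike.re (inner ℂ (A x) x : ℂ)) ‖A‖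
      (norm_nonneg A) (fun x => hA.re_inner_nonneg_left x) hgc key2
    refine ⟨adjoint D, ?_, ?_⟩
    · rw [adjoint_adjoint]
      exact hD.symm
    · rw [adjoint_adjoint]
      constructor
      · exact ContinuousLinearMap.isSelfAdjoint_iff_isSymmetric.mp (hA.isSelfAdjoint.sub (isSelfAdjoint_iff'.mpr (by rw [adjoint_comp, adjoint_adjoint])))
      · intro x
        have hDD : (inner ℂ (D ((adjoint D) x)) x : ℂ)
            = inner ℂ ((adjoint D) x) ((adjoint D) x) :=
          (adjoint_inner_right D ((adjoint D) x) x).symm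
        rw [reApplyInnerSelf_apply, ContinuousLinearMap.sub_apply, inner_sub_left, map_sub,
          ContinuousLinearMap.comp_apply, hDD, inner_self_eq_norm_sq]
        have := hb x
        linarith
  · rintro ⟨C, hXC, hpos⟩
    constructor
    · intro v w
      simp only [ContinuousLinearMap.coe_coe]
      rw [blockOperator_inner]
      have hMw : (inner (𝕜 := ℂ) v (blockOperator A X (adjoint X) B w))
          = inner ℂ v.fst (A w.fst) + inner ℂ v.fst (X w.snd)
            + inner ℂ v.snd ((adjoint X) w.fst) + inner ℂ v.snd (B w.snd) := by
        rw [← inner_conj_symm, blockOperator_inner]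
        simp only [map_add, inner_conj_symm]
        try ring
      rw [hMw]
      have hAsym' : ∀ a b : H, (inner ℂ (A a) b : ℂ) = inner ℂ a (A b) := fun a b =>
        hA.1 a b
      have hBsym' : ∀ a b : H, (inner ℂ (B a) b : ℂ) = inner ℂ a (B b) := fun a b =>
        hB.1 a b
      have hX1 : (inner ℂ ((adjoint X) v.fst) w.snd : ℂ) = inner ℂ v.fst (X w.snd) :=
        adjoint_inner_left X w.snd v.fst
      have hX2 : (inner ℂ (X v.snd) w.fst : ℂ) = inner ℂ v.snd ((adjoint X) w.fst) :=
        (adjoint_inner_right X v.snd w.fst).symm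
      rw [hAsym' v.fst w.fst, hBsym' v.snd w.snd, hX1, hX2]
      ring
    · intro v
      rw [reApplyInnerSelf_apply, blockOperator_inner]
      have e1 : (inner ℂ (X v.snd) v.fst : ℂ) = inner ℂ (SB v.snd) (C v.fst) := by
        rw [hXC, ContinuousLinearMap.comp_apply, adjoint_inner_left]
      have e2 : RCLike.re (inner ℂ ((adjoint X) v.fst) v.snd : ℂ)
          = RCLike.re (inner ℂ (SB v.snd) (C v.fst) : ℂ) := by
        rw [adjoint_inner_left, inner_re_symm, e1]
      have e3 : RCLike.re (inner ℂ (B v.snd) v.snd : ℂ) = ‖SB v.snd‖ ^ 2 := hBSB v.snd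
      have e4 : ‖C v.fst‖ ^ 2 ≤ RCLike.re (inner ℂ (A v.fst) v.fst : ℂ) := by
        have h1 := hpos.2 v.fst
        rw [reApplyInnerSelf_apply, ContinuousLinearMap.sub_apply, inner_sub_left, map_sub,
          ContinuousLinearMap.comp_apply, adjoint_inner_left, inner_self_eq_norm_sq] at h1
        linarith
      have e5 : ‖C v.fst + SB v.snd‖ ^ 2
          = ‖C v.fst‖ ^ 2 + 2 * RCLike.re (inner ℂ (C v.fst) (SB v.snd) : ℂ) + ‖SB v.snd‖ ^ 2 :=
        norm_add_sq _ _
      simp only [map_add]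
      rw [e1, e2, e3]
      rw [inner_re_symm (SB v.snd) (C v.fst)] at *
      nlinarith [sq_nonneg ‖C v.fst + SB v.snd‖]
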